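/- Let (Δ_k)_{k≥0} be the atoms of a Poisson point process on ℝ with intensity measure e^x dx, and let β > 1. Then Σ_{k≥0} e^{-βΔ_k} is almost surely finite and strictly positive, and the normalized weights ( e^{-βΔ_k} / Σ_j e^{-βΔ_j} )_{k≥0}, arranged in decreasing order, have the Poisson–Dirichlet distribution with parameters (1/β, 0). -/

import Mathlib

open MeasureTheory ProbabilityTheory Real
open scoped ProbabilityTheory ENNReal NNReal

noncomputable section

variable {Ω : Type*}

/-- Number of atoms of the point process `Δ` lying in the set `A`. -/
def ppCount (Δ : ℕ → Ω → ℝ) (A : Set ℝ) (ω : Ω) : ℝ≥0∞ :=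
  ∑' k : ℕ, A.indicator (fun _ => (1 : ℝ≥0∞)) (Δ k ω)

/-- `Δ` enumerates the atoms of a Poisson point process on `ℝ` with intensity measure `μ`:
for each measurable `A` of finite intensity, the number of atoms in `A` is Poisson distributed
with parameter `μ(A)`, and the counts over finitely many pairwise disjoint sets are
independent. -/
def IsPoissonPP [MeasureSpace Ω] (Δ : ℕ → Ω → ℝ) (μ : Measure ℝ) : Prop :=
  (∀ k, Measurable (Δ k)) ∧
  (∀ A : Set ℝ, MeasurableSet A → μ A < ⊤ → ∀ n : ℕ,
    (ℙ : Measure Ω) {ω | ppCount Δ A ω = n}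
      = ENNReal.ofReal (poissonPMFReal (μ A).toNNReal n)) ∧
  (∀ (m : ℕ) (A : Fin m → Set ℝ), (∀ i, MeasurableSet (A i)) →
    Pairwise (Function.onFun Disjoint A) →
    iIndepFun (fun i ω => ppCount Δ (A i) ω) (ℙ : Measure Ω))

/-- The intensity measure `e^x dx` on `ℝ`. -/
def expIntensity : Measure ℝ :=
  volume.withDensity fun x => ENNReal.ofReal (Real.exp x)

/-- The intensity measure `α x^{-α-1} dx` on `(0,∞)` of the jumps of an `α`-stable
subordinator. -/
def stableIntensity (α : ℝ) : Measure ℝ :=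
  volume.withDensity fun x => if 0 < x then ENNReal.ofReal (α * x ^ (-α - 1)) else 0

/-- `(p_k)` has the Poisson–Dirichlet distribution with parameters `(α, 0)`: its law is that of
the decreasing sequence of normalized jumps of an `α`-stable subordinator, i.e. of the
decreasing enumeration of the normalized atoms of a Poisson point process with intensity
`α x^{-α-1} dx` on `(0,∞)`. -/
def IsPoissonDirichlet [MeasureSpace Ω] (α : ℝ) (p : ℕ → Ω → ℝ) : Prop :=
  ∃ (Ω' : Type) (_ : MeasureSpace Ω') (_ : IsProbabilityMeasure (ℙ : Measure Ω'))
      (J : ℕ → Ω' → ℝ),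
    IsPoissonPP J (stableIntensity α) ∧
    (∀ ω', Antitone fun k => J k ω') ∧
    Measure.map (fun ω' (k : ℕ) => J k ω' / ∑' j : ℕ, J j ω') (ℙ : Measure Ω')
      = Measure.map (fun ω (k : ℕ) => p k ω) (ℙ : Measure Ω)

end

section AuxHelpers

lemma aux_summable_iff (f : ℕ → ℝ) (hf : ∀ k, 0 ≤ f k) :
    Summable f ↔ ∑' k, ENNReal.ofReal (f k) ≠ ⊤ := by
  constructor
  · intro h
    rw [← ENNReal.ofReal_tsum_of_nonneg hf h]
    exact ENNReal.ofReal_ne_top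
  · intro h
    have h' : ∑' k, ((f k).toNNReal : ℝ≥0∞) ≠ ⊤ := h
    have hs := ENNReal.tsum_coe_ne_top_iff_summable.mp h'
    have heq : (fun k => ((f k).toNNReal : ℝ)) = f := by
      funext k; exact Real.coe_toNNReal _ (hf k)
    exact heq ▸ NNReal.summable_coe.mpr hs

lemma aux_nonneg_tsum_toReal (f : ℕ → ℝ) (hf : ∀ k, 0 ≤ f k) :
    ∑' k, f k = (∑' k, ENNReal.ofReal (f k)).toReal := by
  by_cases h : Summable f
  · rw [← ENNReal.ofReal_tsum_of_nonneg hf h, ENNReal.toReal_ofReal (tsum_nonneg hf)]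
  · rw [tsum_eq_zero_of_not_summable h]
    have htop : ∑' k, ENNReal.ofReal (f k) = ⊤ := by
      by_contra hne
      exact h ((aux_summable_iff f hf).mpr hne)
    rw [htop, ENNReal.toReal_top]

lemma aux_count_finite (x : ℕ → ℝ) (A : Set ℝ)
    (h : ∑' k, A.indicator (fun _ => (1 : ℝ≥0∞)) (x k) ≠ ⊤) : {k | x k ∈ A}.Finite := by
  by_contra hinf
  apply h
  have hinf' : {k | x k ∈ A}.Infinite := hinf
  haveI := Set.infinite_coe_iff.mpr hinf'
  refine top_le_iff.mp ?_
  calc (⊤ : ℝ≥0∞) = ∑' (_ : {k | x k ∈ A}), (1 : ℝ≥0∞) :=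
        (ENNReal.tsum_const_eq_top_of_ne_zero one_ne_zero).symm
    _ = ∑' (k : {k | x k ∈ A}), A.indicator (fun _ => (1 : ℝ≥0∞)) (x k) := by
        apply tsum_congr; rintro ⟨k, hk⟩
        exact (Set.indicator_of_mem hk (fun _ => (1:ℝ≥0∞))).symm
    _ ≤ ∑' k, A.indicator (fun _ => (1 : ℝ≥0∞)) (x k) :=
        ENNReal.tsum_comp_le_tsum_of_injective Subtype.val_injective _

lemma aux_tsum_Iio (k : ℕ) :
    ∑' j : ℕ, (Set.Iio k).indicator (fun _ => (1 : ℝ≥0∞)) j = (k : ℝ≥0∞) := by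
  rw [tsum_eq_sum (s := Finset.range k)
    (fun b hb => Set.indicator_of_notMem (by simpa using hb) _)]
  rw [Finset.sum_congr rfl (fun b hb => Set.indicator_of_mem (by simpa using hb) _)]
  simp

lemma aux_tsum_Iic (k : ℕ) :
    ∑' j : ℕ, (Set.Iic k).indicator (fun _ => (1 : ℝ≥0∞)) j = (k : ℝ≥0∞) + 1 := by
  rw [tsum_eq_sum (s := Finset.range (k+1))
    (fun b hb => Set.indicator_of_notMem (by simp at hb ⊢; omega) _)]
  rw [Finset.sum_congr rfl (fun b hb => Set.indicator_of_mem (by simp at hb ⊢; omega) _)]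
  simp

lemma aux_ppCount_meas {Ω : Type*} [MeasurableSpace Ω] {Δ : ℕ → Ω → ℝ}
    (hΔ : ∀ k, Measurable (Δ k)) {A : Set ℝ} (hA : MeasurableSet A) :
    Measurable (fun ω => ∑' k : ℕ, A.indicator (fun _ => (1 : ℝ≥0∞)) (Δ k ω)) :=
  Measurable.ennreal_tsum fun k => (measurable_const.indicator hA).comp (hΔ k)

set_option maxHeartbeats 1000000 in
lemma aux_poisson {Ω : Type*} [MeasurableSpace Ω] (μ : Measure Ω) [IsProbabilityMeasure μ]
    {N : Ω → ℝ≥0∞} (hN : Measurable N) (lam : ℝ≥0)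
    (h : ∀ n : ℕ, μ {ω | N ω = n} = ENNReal.ofReal (poissonPMFReal lam n)) :
    (∫⁻ ω, N ω ∂μ ≤ lam) ∧ (∀ᵐ ω ∂μ, N ω ≠ ⊤) := by
  have hmeasn : ∀ n : ℕ, MeasurableSet {ω | N ω = (n : ℝ≥0∞)} :=
    fun n => hN (measurableSet_singleton _)
  have hdisj : Pairwise (Function.onFun Disjoint fun n : ℕ => {ω | N ω = (n : ℝ≥0∞)}) := by
    intro i j hij
    apply Set.disjoint_left.mpr
    intro ω hi hj
    exact hij (Nat.cast_injective ((hi : N ω = _).symm.trans (hj : N ω = _)))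
  have hsum1 : ∑' n : ℕ, ENNReal.ofReal (poissonPMFReal lam n) = 1 := by
    rw [← ENNReal.ofReal_tsum_of_nonneg (fun n => poissonPMFReal_nonneg)
      (poissonPMFRealSum lam).summable,
      (show ∑' n : ℕ, poissonPMFReal lam n = 1 from (poissonPMFRealSum lam).tsum_eq), ENNReal.ofReal_one]
  have hUmeas : MeasurableSet (⋃ n : ℕ, {ω | N ω = (n : ℝ≥0∞)}) := MeasurableSet.iUnion hmeasn
  have hUone : μ (⋃ n : ℕ, {ω | N ω = (n : ℝ≥0∞)}) = 1 := by
    rw [measure_iUnion hdisj hmeasn]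
    simpa [h] using hsum1
  have hUc : μ (⋃ n : ℕ, {ω | N ω = (n : ℝ≥0∞)})ᶜ = 0 := by
    have := measure_compl hUmeas (measure_ne_top μ _)
    rw [hUone, measure_univ] at this
    simpa using this
  constructor
  · have key : ∫⁻ ω, N ω ∂μ = ∫⁻ ω in (⋃ n : ℕ, {ω | N ω = (n : ℝ≥0∞)}), N ω ∂μ := by
      rw [← lintegral_add_compl N hUmeas, setLIntegral_measure_zero _ _ hUc, add_zero]
    have heach : ∀ n : ℕ, ∫⁻ ω in {ω | N ω = (n : ℝ≥0∞)}, N ω ∂μ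
        = (n : ℝ≥0∞) * ENNReal.ofReal (poissonPMFReal lam n) := by
      intro n
      rw [setLIntegral_congr_fun (hmeasn n) (fun ω hω => hω),
        setLIntegral_const, h n]
    rw [key, lintegral_iUnion hmeasn hdisj, tsum_congr heach]
    set q : ℕ → ℝ≥0∞ := fun n => ENNReal.ofReal (poissonPMFReal lam n) with hq
    have hshift : ∑' n : ℕ, (n : ℝ≥0∞) * q n = ∑' n : ℕ, ((n+1 : ℕ) : ℝ≥0∞) * q (n+1) := by
      rw [tsum_eq_zero_add' ENNReal.summable]
      simp
    have hterm : ∀ n : ℕ, ((n+1 : ℕ) : ℝ≥0∞) * q (n+1) = (lam : ℝ≥0∞) * q n := by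
      intro n
      have h2 : (n.factorial : ℝ) ≠ 0 := Nat.cast_ne_zero.mpr n.factorial_ne_zero
      have hfact : ((n+1 : ℕ) : ℝ) * poissonPMFReal lam (n+1) = lam * poissonPMFReal lam n := by
        rw [poissonPMFReal, poissonPMFReal, Nat.factorial_succ]
        push_cast
        field_simp
        ring
      rw [hq]
      simp only []
      rw [← ENNReal.ofReal_natCast (n+1), ← ENNReal.ofReal_mul (by positivity), hfact,
        ENNReal.ofReal_mul lam.coe_nonneg, ENNReal.ofReal_coe_nnreal]
    rw [hshift, tsum_congr hterm, ENNReal.tsum_mul_left, hsum1, mul_one]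
  · have hsub : {ω | N ω = ⊤} ⊆ (⋃ n : ℕ, {ω | N ω = (n : ℝ≥0∞)})ᶜ := by
      intro ω hω
      simp only [Set.mem_compl_iff, Set.mem_iUnion, Set.mem_setOf_eq, not_exists]
      intro n hn
      rw [Set.mem_setOf_eq] at hω
      rw [hω] at hn
      exact (ENNReal.natCast_ne_top n) hn.symm
    have hz : μ {ω | N ω = ⊤} = 0 := measure_mono_null hsub hUc
    rw [ae_iff]
    simpa only [ne_eq, not_not] using hz

lemma aux_band (a : ℝ) :
    (volume.withDensity fun x => ENNReal.ofReal (Real.exp x)) (Set.Ico a (a+1))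
      ≤ ENNReal.ofReal (Real.exp (a+1)) := by
  rw [withDensity_apply _ measurableSet_Ico]
  calc ∫⁻ x in Set.Ico a (a+1), ENNReal.ofReal (Real.exp x)
      ≤ ∫⁻ _x in Set.Ico a (a+1), ENNReal.ofReal (Real.exp (a+1)) := by
        apply setLIntegral_mono' measurableSet_Ico
        intro x hx
        exact ENNReal.ofReal_le_ofReal (Real.exp_le_exp.mpr (le_of_lt hx.2))
    _ = ENNReal.ofReal (Real.exp (a+1)) * volume (Set.Ico a (a+1)) := setLIntegral_const _ _
    _ = ENNReal.ofReal (Real.exp (a+1)) := by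
        rw [Real.volume_Ico]
        simp

lemma aux_Iio_lt_top :
    (volume.withDensity fun x => ENNReal.ofReal (Real.exp x)) (Set.Iio (0:ℝ)) < ⊤ := by
  have hgeom : Summable fun m : ℕ => Real.exp (-(m:ℝ)) := by
    have heq : ∀ m : ℕ, Real.exp (-(m:ℝ)) = (Real.exp (-1))^m := by
      intro m
      rw [← Real.exp_nat_mul]
      congr 1
      ring
    exact (funext heq : _) ▸ summable_geometric_of_lt_one (Real.exp_pos _).le
      (exp_lt_one_iff.mpr (by norm_num))
  have hsub : Set.Iio (0:ℝ) ⊆ ⋃ m : ℕ, Set.Ico (-(m:ℝ)-1) (-(m:ℝ)-1+1) := by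
    intro x hx
    simp only [Set.mem_iUnion, Set.mem_Ico]
    have hx0 : 0 < -x := by simp only [Set.mem_Iio] at hx; linarith
    set n := ⌈-x⌉₊ with hn
    have hn1 : 1 ≤ n := Nat.one_le_ceil_iff.mpr hx0
    refine ⟨n - 1, ?_, ?_⟩
    · have hcast : ((n-1 : ℕ) : ℝ) = (n : ℝ) - 1 := by
        rw [Nat.cast_sub hn1]; simp
      have hle : -x ≤ (n : ℝ) := Nat.le_ceil (-x)
      rw [hcast]; linarith
    · have hlt : ¬ (-x ≤ ((n-1 : ℕ) : ℝ)) := by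
        intro hcon
        have : n ≤ n - 1 := Nat.ceil_le.mpr hcon
        omega
      push_neg at hlt
      linarith
  calc (volume.withDensity fun x => ENNReal.ofReal (Real.exp x)) (Set.Iio (0:ℝ))
      ≤ ∑' m : ℕ, (volume.withDensity fun x => ENNReal.ofReal (Real.exp x))
          (Set.Ico (-(m:ℝ)-1) (-(m:ℝ)-1+1)) :=
        (measure_mono hsub).trans (measure_iUnion_le _)
    _ ≤ ∑' m : ℕ, ENNReal.ofReal (Real.exp (-(m:ℝ))) := by
        apply ENNReal.tsum_le_tsum
        intro m
        have hb := aux_band (-(m:ℝ)-1)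
        have he : (-(m:ℝ)-1) + 1 = -(m:ℝ) := by ring
        rw [he] at hb ⊢
        exact hb
    _ = ENNReal.ofReal (∑' m : ℕ, Real.exp (-(m:ℝ))) :=
        (ENNReal.ofReal_tsum_of_nonneg (fun m => (Real.exp_pos _).le) hgeom).symm
    _ < ⊤ := ENNReal.ofReal_lt_top

end AuxHelpers

set_option maxHeartbeats 1000000 in
lemma aux_cov {β : ℝ} (hβ : 1 < β) (A : Set ℝ) (hA : MeasurableSet A) :
    expIntensity ((fun x => Real.exp (-β * x)) ⁻¹' A) = stableIntensity (1/β) A := by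
  have hβ0 : 0 < β := lt_trans one_pos hβ
  set α : ℝ := 1/β with hα
  set T : ℝ → ℝ := fun x => Real.exp (-β * x) with hTdef
  set dens : ℝ → ℝ≥0∞ := fun y => if 0 < y then ENNReal.ofReal (α * y ^ (-α - 1)) else 0
    with hdens
  have hTmeas : Measurable T := Real.measurable_exp.comp (measurable_id.const_mul (-β))
  have hs : MeasurableSet (T ⁻¹' A) := hTmeas hA
  have h2 : expIntensity (T ⁻¹' A) = ∫⁻ x in T ⁻¹' A, ENNReal.ofReal (Real.exp x) := by
    rw [expIntensity, withDensity_apply _ hs]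
  have h1 : stableIntensity α A = ∫⁻ y in A, dens y := by
    rw [stableIntensity, withDensity_apply _ hA]
  -- restrict to positive part
  have h3 : ∫⁻ y in A, dens y = ∫⁻ y in A ∩ Set.Ioi 0, dens y := by
    rw [← lintegral_indicator hA, ← lintegral_indicator (hA.inter measurableSet_Ioi)]
    congr 1
    funext y
    by_cases hy : 0 < y <;> by_cases hyA : y ∈ A <;>
      simp [Set.indicator_apply, hy, hyA, hdens, Set.mem_Ioi]
  have hrange : Set.range T = Set.Ioi 0 := by
    rw [hTdef]
    have hcomp : (fun x => Real.exp (-β * x)) = Real.exp ∘ (fun x : ℝ => -β * x) := rfl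
    rw [hcomp, Set.range_comp]
    have hsurj : Set.range (fun x : ℝ => -β * x) = Set.univ := by
      apply Set.range_eq_univ.mpr
      intro y
      exact ⟨y / (-β), by field_simp⟩
    rw [hsurj, Set.image_univ, Real.range_exp]
  have h4 : A ∩ Set.Ioi 0 = T '' (T ⁻¹' A) := by
    rw [Set.image_preimage_eq_inter_range, hrange]
  have hder : ∀ x ∈ T ⁻¹' A, HasDerivWithinAt T (-β * Real.exp (-β * x)) (T ⁻¹' A) x := by
    intro x _
    have h := ((hasDerivAt_id x).const_mul (-β)).exp
    have h' : HasDerivAt T (Real.exp (-β * x) * (-β * 1)) x := h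
    have : Real.exp (-β * x) * (-β * 1) = -β * Real.exp (-β * x) := by ring
    rw [this] at h'
    exact h'.hasDerivWithinAt
  have hinj : Set.InjOn T (T ⁻¹' A) := by
    have : StrictAnti T := by
      intro a b hab
      apply Real.exp_lt_exp.mpr
      nlinarith
    exact (this.injective).injOn
  have h5 : ∫⁻ y in T '' (T ⁻¹' A), dens y
      = ∫⁻ x in T ⁻¹' A, ENNReal.ofReal |(-β * Real.exp (-β * x))| * dens (T x) := by
    simpa only [ContinuousLinearMap.det_toSpanSingleton] using
      lintegral_image_eq_lintegral_abs_det_fderiv_mul volume hs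
        (fun x hx => (hder x hx).hasFDerivWithinAt) hinj dens
  have h6 : ∀ x : ℝ, ENNReal.ofReal |(-β * Real.exp (-β * x))| * dens (T x)
      = ENNReal.ofReal (Real.exp x) := by
    intro x
    have hTx : 0 < T x := Real.exp_pos _
    have habs : |(-β * Real.exp (-β * x))| = β * Real.exp (-β * x) := by
      rw [abs_mul, abs_neg, abs_of_pos hβ0, abs_of_pos (Real.exp_pos _)]
    rw [habs, hdens]
    simp only [if_pos hTx]
    rw [← ENNReal.ofReal_mul (by positivity)]
    congr 1
    have hrpow : (T x) ^ (-α - 1) = Real.exp ((-β * x) * (-α - 1)) := by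
      rw [hTdef]
      rw [Real.rpow_def_of_pos (Real.exp_pos _), Real.log_exp]
    rw [hrpow]
    have hβα : β * α = 1 := by
      rw [hα]; field_simp
    have hexp : -β * x + (-β * x) * (-α - 1) = x := by
      have expand : (-β * x) * (-α - 1) = β * α * x + β * x := by ring
      rw [expand, hβα]
      ring
    calc β * Real.exp (-β * x) * (α * Real.exp ((-β * x) * (-α - 1)))
        = (β * α) * (Real.exp (-β * x) * Real.exp ((-β * x) * (-α - 1))) := by ring
      _ = 1 * Real.exp (-β * x + (-β * x) * (-α - 1)) := by rw [hβα, ← Real.exp_add]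
      _ = Real.exp x := by rw [one_mul, hexp]
  rw [h2, h1, h3, h4, h5]
  exact (lintegral_congr fun x => (h6 x)).symm

/-- For a Poisson point process `(Δ_k)` on `ℝ` with intensity `e^x dx` and `β > 1`,
`Σ_k e^{-β Δ_k}` is a.s. finite and strictly positive, and the normalized weights
`e^{-β Δ_k} / Σ_j e^{-β Δ_j}`, arranged in decreasing order, follow the Poisson–Dirichlet
distribution with parameters `(1/β, 0)`. -/
theorem stmt6 {Ω : Type*} [MeasureSpace Ω] [IsProbabilityMeasure (ℙ : Measure Ω)]
    (Δ : ℕ → Ω → ℝ) (hΔ : IsPoissonPP Δ expIntensity) (β : ℝ) (hβ : 1 < β) :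
    (∀ᵐ ω ∂(ℙ : Measure Ω),
      Summable (fun k => Real.exp (-β * Δ k ω)) ∧ 0 < ∑' k : ℕ, Real.exp (-β * Δ k ω)) ∧
    ∀ p : ℕ → Ω → ℝ,
      (∀ ω, Antitone fun k => p k ω) →
      (∀ ω, ∃ σ : ℕ ≃ ℕ, ∀ k,
        p k ω = Real.exp (-β * Δ (σ k) ω) / ∑' j : ℕ, Real.exp (-β * Δ j ω)) →
      IsPoissonDirichlet (1 / β) p := by
  obtain ⟨hmeas, hlaw, hind⟩ := hΔ
  have hβ0 : 0 < β := lt_trans one_pos hβ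
  set X : ℕ → Ω → ℝ := fun k ω => Real.exp (-β * Δ k ω) with hXdef
  have hX : ∀ k, Measurable (X k) := fun k =>
    Real.measurable_exp.comp ((hmeas k).const_mul (-β))
  set T : ℝ → ℝ := fun x => Real.exp (-β * x) with hTdef
  have hTmeas : Measurable T := Real.measurable_exp.comp (measurable_id.const_mul (-β))
  have hbandfin : ∀ n : ℕ, expIntensity (Set.Ico (n:ℝ) ((n:ℝ)+1)) < ⊤ := fun n =>
    lt_of_le_of_lt (aux_band (n:ℝ)) ENNReal.ofReal_lt_top
  have hMmeas : ∀ n : ℕ, Measurable (ppCount Δ (Set.Ico (n:ℝ) ((n:ℝ)+1))) := fun n =>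
    aux_ppCount_meas hmeas measurableSet_Ico
  have hMint : ∀ n : ℕ, ∫⁻ ω, ppCount Δ (Set.Ico (n:ℝ) ((n:ℝ)+1)) ω ∂(ℙ : Measure Ω)
      ≤ ENNReal.ofReal (Real.exp ((n:ℝ)+1)) := by
    intro n
    have hp := hlaw _ measurableSet_Ico (hbandfin n)
    calc ∫⁻ ω, ppCount Δ (Set.Ico (n:ℝ) ((n:ℝ)+1)) ω ∂(ℙ : Measure Ω)
        ≤ ((expIntensity (Set.Ico (n:ℝ) ((n:ℝ)+1))).toNNReal : ℝ≥0∞) :=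
          (aux_poisson (ℙ : Measure Ω) (hMmeas n) _ hp).1
      _ = expIntensity (Set.Ico (n:ℝ) ((n:ℝ)+1)) := ENNReal.coe_toNNReal (hbandfin n).ne
      _ ≤ ENNReal.ofReal (Real.exp ((n:ℝ)+1)) := aux_band (n:ℝ)
  set W : Ω → ℝ≥0∞ := fun ω => ∑' n : ℕ, ENNReal.ofReal (Real.exp (-β * (n:ℝ)))
      * ppCount Δ (Set.Ico (n:ℝ) ((n:ℝ)+1)) ω with hWdef
  have hWmeas : Measurable W := Measurable.ennreal_tsum fun n => (hMmeas n).const_mul _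
  have hWint : ∫⁻ ω, W ω ∂(ℙ : Measure Ω) ≠ ⊤ := by
    have hgeom : Summable (fun n : ℕ => Real.exp 1 * (Real.exp (1 - β))^n) :=
      (summable_geometric_of_lt_one (Real.exp_pos _).le
        (exp_lt_one_iff.mpr (by linarith))).mul_left _
    have hcalc : ∫⁻ ω, W ω ∂(ℙ : Measure Ω)
        ≤ ENNReal.ofReal (∑' n:ℕ, Real.exp 1 * (Real.exp (1-β))^n) := by
      rw [hWdef]
      rw [lintegral_tsum (fun n => ((hMmeas n).const_mul _).aemeasurable)]
      calc ∑' n:ℕ, ∫⁻ ω, ENNReal.ofReal (Real.exp (-β*(n:ℝ)))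
              * ppCount Δ (Set.Ico (n:ℝ) ((n:ℝ)+1)) ω ∂(ℙ : Measure Ω)
          = ∑' n:ℕ, ENNReal.ofReal (Real.exp (-β*(n:ℝ)))
              * ∫⁻ ω, ppCount Δ (Set.Ico (n:ℝ) ((n:ℝ)+1)) ω ∂(ℙ : Measure Ω) :=
            tsum_congr fun n => lintegral_const_mul _ (hMmeas n)
        _ ≤ ∑' n:ℕ, ENNReal.ofReal (Real.exp (-β*(n:ℝ))) * ENNReal.ofReal (Real.exp ((n:ℝ)+1)) :=
            ENNReal.tsum_le_tsum fun n => mul_le_mul_right (hMint n) _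
        _ = ∑' n:ℕ, ENNReal.ofReal (Real.exp 1 * (Real.exp (1-β))^n) := by
            apply tsum_congr; intro n
            rw [← ENNReal.ofReal_mul (Real.exp_pos _).le]
            congr 1
            rw [← Real.exp_nat_mul, ← Real.exp_add, ← Real.exp_add]
            congr 1
            ring
        _ = ENNReal.ofReal (∑' n:ℕ, Real.exp 1 * (Real.exp (1-β))^n) :=
            (ENNReal.ofReal_tsum_of_nonneg (fun n => by positivity) hgeom).symm
    exact (lt_of_le_of_lt hcalc ENNReal.ofReal_lt_top).ne
  have hWae : ∀ᵐ ω ∂(ℙ : Measure Ω), W ω < ⊤ := ae_lt_top hWmeas hWint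
  have hN0 : ∀ᵐ ω ∂(ℙ : Measure Ω), ppCount Δ (Set.Iio 0) ω ≠ ⊤ := by
    have hp := hlaw _ measurableSet_Iio aux_Iio_lt_top
    exact (aux_poisson (ℙ : Measure Ω)
      (aux_ppCount_meas hmeas measurableSet_Iio) _ hp).2
  have hGood : ∀ᵐ ω ∂(ℙ : Measure Ω), Summable fun k => X k ω := by
    filter_upwards [hWae, hN0] with ω hW h0
    apply (aux_summable_iff _ (fun k => (Real.exp_pos _).le)).mpr
    set K : Set ℕ := {k | Δ k ω ∈ Set.Iio 0} with hK
    have hKfin : K.Finite := aux_count_finite (fun k => Δ k ω) _ h0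
    rw [← Summable.tsum_add_tsum_compl (s := K) ENNReal.summable ENNReal.summable]
    apply ENNReal.add_ne_top.mpr
    constructor
    · haveI := hKfin.fintype
      rw [tsum_fintype]
      exact (ENNReal.sum_lt_top.mpr fun a _ => ENNReal.ofReal_lt_top).ne
    · have hptwise : ∀ (k : ↥Kᶜ), ENNReal.ofReal (X (↑k) ω)
          ≤ ∑' n:ℕ, ENNReal.ofReal (Real.exp (-β*(n:ℝ)))
              * (Set.Ico (n:ℝ) ((n:ℝ)+1)).indicator (fun _ => (1:ℝ≥0∞)) (Δ (↑k) ω) := by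
        rintro ⟨k, hk⟩
        have hk0 : 0 ≤ Δ k ω := not_lt.mp hk
        have hmem : Δ k ω ∈ Set.Ico ((⌊Δ k ω⌋₊:ℝ)) ((⌊Δ k ω⌋₊:ℝ)+1) :=
          ⟨Nat.floor_le hk0, Nat.lt_floor_add_one _⟩
        calc ENNReal.ofReal (X k ω)
            ≤ ENNReal.ofReal (Real.exp (-β*((⌊Δ k ω⌋₊:ℕ):ℝ)))
              * (Set.Ico ((⌊Δ k ω⌋₊:ℝ)) ((⌊Δ k ω⌋₊:ℝ)+1)).indicator
                  (fun _ => (1:ℝ≥0∞)) (Δ k ω) := by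
              rw [Set.indicator_of_mem hmem, mul_one]
              apply ENNReal.ofReal_le_ofReal
              apply Real.exp_le_exp.mpr
              have hfl := Nat.floor_le hk0
              nlinarith
          _ ≤ ∑' n:ℕ, ENNReal.ofReal (Real.exp (-β*(n:ℝ)))
              * (Set.Ico (n:ℝ) ((n:ℝ)+1)).indicator (fun _ => (1:ℝ≥0∞)) (Δ k ω) :=
              ENNReal.le_tsum _
      have hbound : ∑' (k : ↥Kᶜ), ENNReal.ofReal (X (↑k) ω) ≤ W ω := by
        calc ∑' (k : ↥Kᶜ), ENNReal.ofReal (X (↑k) ω)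
            ≤ ∑' (k : ↥Kᶜ), ∑' n:ℕ, ENNReal.ofReal (Real.exp (-β*(n:ℝ)))
                * (Set.Ico (n:ℝ) ((n:ℝ)+1)).indicator (fun _ => (1:ℝ≥0∞)) (Δ (↑k) ω) :=
              ENNReal.tsum_le_tsum hptwise
          _ ≤ ∑' (k : ℕ), ∑' n:ℕ, ENNReal.ofReal (Real.exp (-β*(n:ℝ)))
                * (Set.Ico (n:ℝ) ((n:ℝ)+1)).indicator (fun _ => (1:ℝ≥0∞)) (Δ k ω) :=
              ENNReal.tsum_comp_le_tsum_of_injective Subtype.val_injective _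
          _ = ∑' n:ℕ, ∑' (k : ℕ), ENNReal.ofReal (Real.exp (-β*(n:ℝ)))
                * (Set.Ico (n:ℝ) ((n:ℝ)+1)).indicator (fun _ => (1:ℝ≥0∞)) (Δ k ω) :=
              ENNReal.tsum_comm
          _ = W ω := by
              apply tsum_congr; intro n
              rw [ENNReal.tsum_mul_left]
              rfl
      exact (lt_of_le_of_lt hbound hW).ne
  constructor
  · filter_upwards [hGood] with ω hsum
    exact ⟨hsum, lt_of_lt_of_le (Real.exp_pos _)
      (Summable.le_tsum hsum 0 fun j _ => (Real.exp_pos _).le)⟩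
  · intro p hp1 hp2
    set S : Ω → ℝ := fun ω => ∑' j, X j ω with hSdef
    have hS_meas : Measurable S := by
      have hfun : S = fun ω => (∑' j, ENNReal.ofReal (X j ω)).toReal := by
        funext ω
        exact aux_nonneg_tsum_toReal _ (fun j => (Real.exp_pos _).le)
      rw [hfun]
      exact ENNReal.measurable_toReal.comp
        (Measurable.ennreal_tsum fun j => ENNReal.measurable_ofReal.comp (hX j))
    have hSnn : ∀ ω, 0 ≤ S ω := fun ω => tsum_nonneg fun j => (Real.exp_pos _).le
    have hσ : ∀ ω k, p k ω = X ((hp2 ω).choose k) ω / S ω := fun ω => (hp2 ω).choose_spec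
    have hp0 : ∀ ω, ¬ Summable (fun j => X j ω) → ∀ k, p k ω = 0 := by
      intro ω h k
      rw [hσ ω k]
      have hz : S ω = 0 := tsum_eq_zero_of_not_summable h
      rw [hz, div_zero]
    have hSpos : ∀ ω, Summable (fun j => X j ω) → 0 < S ω := fun ω hsum =>
      lt_of_lt_of_le (Real.exp_pos _) (Summable.le_tsum hsum 0 fun j _ => (Real.exp_pos _).le)
    have hpnn : ∀ k ω, 0 ≤ p k ω := by
      intro k ω
      rw [hσ ω k]
      exact div_nonneg (Real.exp_pos _).le (hSnn ω)
    have hchar : ∀ ω, Summable (fun j => X j ω) → ∀ (t : ℝ) (k : ℕ),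
        (t < p k ω ↔ (k : ℝ≥0∞) + 1
          ≤ ∑' j, (Set.Ioi t).indicator (fun _ => (1:ℝ≥0∞)) (X j ω / S ω)) := by
      intro ω _ t k
      have hcnt : ∑' j, (Set.Ioi t).indicator (fun _ => (1:ℝ≥0∞)) (X j ω / S ω)
          = ∑' j, (Set.Ioi t).indicator (fun _ => (1:ℝ≥0∞)) (p j ω) := by
        calc ∑' j, (Set.Ioi t).indicator (fun _ => (1:ℝ≥0∞)) (X j ω / S ω)
            = ∑' j, (Set.Ioi t).indicator (fun _ => (1:ℝ≥0∞))
                (X ((hp2 ω).choose j) ω / S ω) :=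
              (Equiv.tsum_eq ((hp2 ω).choose) _).symm
          _ = ∑' j, (Set.Ioi t).indicator (fun _ => (1:ℝ≥0∞)) (p j ω) := by
              apply tsum_congr; intro j; rw [hσ ω j]
      rw [hcnt]
      constructor
      · intro ht
        have hsubset : ∀ j, (Set.Iic k).indicator (fun _ => (1:ℝ≥0∞)) j
            ≤ (Set.Ioi t).indicator (fun _ => (1:ℝ≥0∞)) (p j ω) := by
          intro j
          by_cases hj : j ≤ k
          · rw [Set.indicator_of_mem (Set.mem_Iic.mpr hj),
              Set.indicator_of_mem
                (show p j ω ∈ Set.Ioi t from lt_of_lt_of_le ht (hp1 ω hj))]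
          · rw [Set.indicator_of_notMem (by simpa using hj)]
            exact zero_le
        calc (k : ℝ≥0∞) + 1 = ∑' j:ℕ, (Set.Iic k).indicator (fun _ => (1:ℝ≥0∞)) j :=
              (aux_tsum_Iic k).symm
          _ ≤ _ := ENNReal.tsum_le_tsum hsubset
      · intro hle
        by_contra hnt
        push_neg at hnt
        have hub : ∀ j, (Set.Ioi t).indicator (fun _ => (1:ℝ≥0∞)) (p j ω)
            ≤ (Set.Iio k).indicator (fun _ => (1:ℝ≥0∞)) j := by
          intro j
          by_cases hj : j < k
          · rw [Set.indicator_of_mem (Set.mem_Iio.mpr hj)]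
            by_cases hm : p j ω ∈ Set.Ioi t
            · rw [Set.indicator_of_mem hm]
            · rw [Set.indicator_of_notMem hm]; exact zero_le_one
          · have hple : p j ω ≤ t := le_trans (hp1 ω (not_lt.mp hj)) hnt
            rw [Set.indicator_of_notMem (show p j ω ∉ Set.Ioi t from not_lt.mpr hple)]
            exact zero_le
        have hcontr : (k : ℝ≥0∞) + 1 ≤ (k : ℝ≥0∞) :=
          le_trans hle (le_trans (ENNReal.tsum_le_tsum hub) (le_of_eq (aux_tsum_Iio k)))
        have hlt : (k : ℝ≥0∞) < (k : ℝ≥0∞) + 1 :=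
          ENNReal.lt_add_right (ENNReal.natCast_ne_top k) one_ne_zero
        exact absurd hcontr (not_le.mpr hlt)
    have hGSmeas : MeasurableSet {ω | Summable fun j => X j ω} := by
      have hset : {ω | Summable fun j => X j ω}
          = ((fun ω => ∑' j, ENNReal.ofReal (X j ω)) ⁻¹' {⊤})ᶜ := by
        ext ω
        simp only [Set.mem_compl_iff, Set.mem_preimage, Set.mem_singleton_iff,
          Set.mem_setOf_eq]
        exact aux_summable_iff _ (fun j => (Real.exp_pos _).le)
      rw [hset]
      exact ((Measurable.ennreal_tsum fun j => ENNReal.measurable_ofReal.comp (hX j))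
        (measurableSet_singleton ⊤)).compl
    have hp_meas : ∀ k, Measurable (p k) := by
      intro k
      apply measurable_of_Ioi
      intro t
      have hCmeas : Measurable fun ω =>
          ∑' j, (Set.Ioi t).indicator (fun _ => (1:ℝ≥0∞)) (X j ω / S ω) :=
        Measurable.ennreal_tsum fun j =>
          (measurable_const.indicator measurableSet_Ioi).comp ((hX j).div hS_meas)
      have hE : p k ⁻¹' Set.Ioi t
          = ({ω | Summable fun j => X j ω} ∩ {ω | (k : ℝ≥0∞) + 1
              ≤ ∑' j, (Set.Ioi t).indicator (fun _ => (1:ℝ≥0∞)) (X j ω / S ω)})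
            ∪ ({ω | Summable fun j => X j ω}ᶜ ∩ {_ω : Ω | t < (0:ℝ)}) := by
        ext ω
        by_cases hs : Summable fun j => X j ω
        · simp only [Set.mem_preimage, Set.mem_Ioi, Set.mem_union, Set.mem_inter_iff,
            Set.mem_setOf_eq, Set.mem_compl_iff, hs, not_true_eq_false, false_and,
            or_false, true_and]
          exact hchar ω hs t k
        · simp only [Set.mem_preimage, Set.mem_Ioi, Set.mem_union, Set.mem_inter_iff,
            Set.mem_setOf_eq, Set.mem_compl_iff, hs, false_and, not_false_eq_true,
            true_and, false_or]
          rw [hp0 ω hs k]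
      rw [hE]
      exact (hGSmeas.inter (hCmeas measurableSet_Ici)).union
        (hGSmeas.compl.inter (MeasurableSet.const _))
    set G : Ω → ℕ → ℝ := fun ω k => S ω * p k ω with hGdef
    have hGanti : ∀ ω, Antitone (G ω) := fun ω j k hjk =>
      mul_le_mul_of_nonneg_left (hp1 ω hjk) (hSnn ω)
    have hGnn : ∀ ω k, 0 ≤ G ω k := fun ω k => mul_nonneg (hSnn ω) (hpnn k ω)
    have hG_meas : Measurable G :=
      measurable_pi_lambda _ fun k => hS_meas.mul (hp_meas k)
    set G' : Ω → {f : ℕ → ℝ // Antitone f ∧ ∀ k, 0 ≤ f k} :=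
      fun ω => ⟨G ω, hGanti ω, hGnn ω⟩ with hG'def
    have hG' : Measurable G' := Measurable.subtype_mk hG_meas
    have hae2 : ∀ᵐ ω ∂(ℙ : Measure Ω),
        (∀ A : Set ℝ, (∑' k, A.indicator (fun _ => (1:ℝ≥0∞)) (G ω k))
            = ppCount Δ (T ⁻¹' A) ω)
        ∧ (∀ k, G ω k / (∑' j, G ω j) = p k ω) := by
      filter_upwards [hGood] with ω hsum
      have hS0 : 0 < S ω := hSpos ω hsum
      have hGX : ∀ k, G ω k = X ((hp2 ω).choose k) ω := by
        intro k
        show S ω * p k ω = _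
        rw [hσ ω k, mul_div_cancel₀ _ hS0.ne']
      have hsumG : ∑' j, G ω j = S ω := by
        calc ∑' j, G ω j = ∑' j, X ((hp2 ω).choose j) ω := tsum_congr hGX
          _ = ∑' j, X j ω := Equiv.tsum_eq ((hp2 ω).choose) (fun j => X j ω)
      constructor
      · intro A
        have hindz : ∀ z : ℝ, A.indicator (fun _ => (1:ℝ≥0∞)) (T z)
            = (T ⁻¹' A).indicator (fun _ => (1:ℝ≥0∞)) z := by
          intro z
          rfl
        calc ∑' k, A.indicator (fun _ => (1:ℝ≥0∞)) (G ω k)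
            = ∑' k, A.indicator (fun _ => (1:ℝ≥0∞)) (X ((hp2 ω).choose k) ω) := by
              apply tsum_congr; intro k; rw [hGX k]
          _ = ∑' k, A.indicator (fun _ => (1:ℝ≥0∞)) (X k ω) :=
              Equiv.tsum_eq ((hp2 ω).choose) (fun k => A.indicator (fun _ => (1:ℝ≥0∞)) (X k ω))
          _ = ∑' k, (T ⁻¹' A).indicator (fun _ => (1:ℝ≥0∞)) (Δ k ω) := by
              apply tsum_congr; intro k; exact hindz (Δ k ω)
          _ = ppCount Δ (T ⁻¹' A) ω := rfl
      · intro k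
        rw [hsumG, hGX k]
        exact (hσ ω k).symm
    have hJmeasA : ∀ (Aset : Set ℝ), MeasurableSet Aset →
        Measurable (fun f : {f : ℕ → ℝ // Antitone f ∧ ∀ k, 0 ≤ f k} =>
          ∑' k, Aset.indicator (fun _ => (1:ℝ≥0∞)) (f.1 k)) :=
      fun Aset hAset => Measurable.ennreal_tsum fun k =>
        (measurable_const.indicator hAset).comp
          ((measurable_pi_apply k).comp measurable_subtype_coe)
    letI MS' : MeasureSpace {f : ℕ → ℝ // Antitone f ∧ ∀ k, 0 ≤ f k} :=
      { toMeasurableSpace := inferInstance, volume := Measure.map G' ℙ }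
    refine ⟨{f : ℕ → ℝ // Antitone f ∧ ∀ k, 0 ≤ f k}, MS', ?_,
      fun k f => f.1 k, ⟨?_, ?_, ?_⟩, ?_, ?_⟩
    · exact Measure.isProbabilityMeasure_map hG'.aemeasurable
    · exact fun k => (measurable_pi_apply k).comp measurable_subtype_coe
    · intro A hA hAfin n
      have hpre : MeasurableSet (T ⁻¹' A) := hTmeas hA
      have hcov : expIntensity (T ⁻¹' A) = stableIntensity (1/β) A := aux_cov hβ A hA
      have hfin' : expIntensity (T ⁻¹' A) < ⊤ := by rw [hcov]; exact hAfin
      have hP := hlaw _ hpre hfin' n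
      rw [hcov] at hP
      have hEvtMeas : MeasurableSet
          {ω' : {f : ℕ → ℝ // Antitone f ∧ ∀ k, 0 ≤ f k} |
            ppCount (fun k f => f.1 k) A ω' = (n:ℝ≥0∞)} := by
        have hm : Measurable
            (ppCount (fun k (f : {f : ℕ → ℝ // Antitone f ∧ ∀ k, 0 ≤ f k}) => f.1 k) A) :=
          hJmeasA A hA
        exact hm (measurableSet_singleton _)
      have hPP : (ℙ : Measure {f : ℕ → ℝ // Antitone f ∧ ∀ k, 0 ≤ f k})
          = Measure.map G' ℙ := rfl
      rw [hPP, Measure.map_apply hG' hEvtMeas]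
      have hsetae : G' ⁻¹' {ω' : {f : ℕ → ℝ // Antitone f ∧ ∀ k, 0 ≤ f k} |
            ppCount (fun k f => f.1 k) A ω' = (n:ℝ≥0∞)}
          =ᵐ[(ℙ : Measure Ω)] {ω | ppCount Δ (T ⁻¹' A) ω = (n:ℝ≥0∞)} := by
        apply Filter.eventuallyEq_set.mpr
        filter_upwards [hae2] with ω hω
        simp only [Set.mem_preimage, Set.mem_setOf_eq]
        have h2 : ppCount (fun k (f : {f : ℕ → ℝ // Antitone f ∧ ∀ k, 0 ≤ f k}) => f.1 k)
            A (G' ω) = ppCount Δ (T ⁻¹' A) ω := hω.1 A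
        rw [h2]
      rw [measure_congr hsetae]
      exact hP
    · intro m A hA hdisj
      have hppm : ∀ i : Fin m, Measurable
          (fun ω' : {f : ℕ → ℝ // Antitone f ∧ ∀ k, 0 ≤ f k} =>
            ppCount (fun k f => f.1 k) (A i) ω') := fun i => hJmeasA (A i) (hA i)
      have hPP : (ℙ : Measure {f : ℕ → ℝ // Antitone f ∧ ∀ k, 0 ≤ f k})
          = Measure.map G' ℙ := rfl
      rw [iIndepFun_iff_measure_inter_preimage_eq_mul]
      intro Sf sets hsets
      have hInd := iIndepFun_iff_measure_inter_preimage_eq_mul.mp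
        (hind m (fun i => T ⁻¹' (A i)) (fun i => hTmeas (hA i))
          (fun i j hij => Disjoint.preimage T (hdisj hij))) Sf hsets
      have hmeasInter : MeasurableSet (⋂ i ∈ Sf,
          (fun ω' : {f : ℕ → ℝ // Antitone f ∧ ∀ k, 0 ≤ f k} =>
            ppCount (fun k f => f.1 k) (A i) ω') ⁻¹' sets i) :=
        MeasurableSet.biInter (Sf : Set (Fin m)).to_countable
          (fun i hi => (hppm i) (hsets i hi))
      have hfac : ∀ i ∈ Sf, G' ⁻¹' ((fun ω' : {f : ℕ → ℝ // Antitone f ∧ ∀ k, 0 ≤ f k} =>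
            ppCount (fun k f => f.1 k) (A i) ω') ⁻¹' sets i)
          =ᵐ[(ℙ : Measure Ω)] (fun ω => ppCount Δ (T ⁻¹' (A i)) ω) ⁻¹' sets i := by
        intro i _
        apply Filter.eventuallyEq_set.mpr
        filter_upwards [hae2] with ω hω
        simp only [Set.mem_preimage]
        have h2 : ppCount (fun k (f : {f : ℕ → ℝ // Antitone f ∧ ∀ k, 0 ≤ f k}) => f.1 k)
            (A i) (G' ω) = ppCount Δ (T ⁻¹' (A i)) ω := hω.1 (A i)
        rw [h2]
      have haeInter : G' ⁻¹' (⋂ i ∈ Sf,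
            (fun ω' : {f : ℕ → ℝ // Antitone f ∧ ∀ k, 0 ≤ f k} =>
              ppCount (fun k f => f.1 k) (A i) ω') ⁻¹' sets i)
          =ᵐ[(ℙ : Measure Ω)]
            ⋂ i ∈ Sf, (fun ω => ppCount Δ (T ⁻¹' (A i)) ω) ⁻¹' sets i := by
        apply Filter.eventuallyEq_set.mpr
        filter_upwards [hae2] with ω hω
        simp only [Set.mem_preimage, Set.mem_iInter]
        constructor
        · intro h i hi
          have h2 : ppCount (fun k (f : {f : ℕ → ℝ // Antitone f ∧ ∀ k, 0 ≤ f k}) => f.1 k)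
              (A i) (G' ω) = ppCount Δ (T ⁻¹' (A i)) ω := hω.1 (A i)
          rw [← h2]
          exact h i hi
        · intro h i hi
          have h2 : ppCount (fun k (f : {f : ℕ → ℝ // Antitone f ∧ ∀ k, 0 ≤ f k}) => f.1 k)
              (A i) (G' ω) = ppCount Δ (T ⁻¹' (A i)) ω := hω.1 (A i)
          rw [h2]
          exact h i hi
      rw [hPP, Measure.map_apply hG' hmeasInter, measure_congr haeInter, hInd]
      apply Finset.prod_congr rfl
      intro i hi
      rw [Measure.map_apply hG' ((hppm i) (hsets i hi)),
        measure_congr (hfac i hi)]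
    · exact fun ω' => ω'.2.1
    · have hNN : Measurable (fun (f : {f : ℕ → ℝ // Antitone f ∧ ∀ k, 0 ≤ f k}) (k:ℕ) =>
          f.1 k / ∑' j, f.1 j) := by
        apply measurable_pi_lambda
        intro k
        apply Measurable.div ((measurable_pi_apply k).comp measurable_subtype_coe)
        have hfun : (fun f : {f : ℕ → ℝ // Antitone f ∧ ∀ k, 0 ≤ f k} => ∑' j, f.1 j)
            = fun f : {f : ℕ → ℝ // Antitone f ∧ ∀ k, 0 ≤ f k} =>
                (∑' j, ENNReal.ofReal (f.1 j)).toReal := by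
          funext f
          exact aux_nonneg_tsum_toReal _ f.2.2
        rw [hfun]
        exact ENNReal.measurable_toReal.comp (Measurable.ennreal_tsum fun j =>
          ENNReal.measurable_ofReal.comp ((measurable_pi_apply j).comp measurable_subtype_coe))
      have hPP : (ℙ : Measure {f : ℕ → ℝ // Antitone f ∧ ∀ k, 0 ≤ f k})
          = Measure.map G' ℙ := rfl
      rw [hPP, Measure.map_map hNN hG']
      apply Measure.map_congr
      filter_upwards [hae2] with ω hω
      funext k
      exact hω.2 k
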